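/- Iterated integrals satisfy the concatenation (coproduct) formula: for any a, b, c ∈ ℂ, C_a^c(f_1, f_2, ..., f_n) = Σ_{i=0}^{n} C_a^b(f_1, ..., f_i) · C_b^c(f_{i+1}, ..., f_n). -/

import Mathlib

noncomputable section

/-- The integral of `f` along the straight-line path from `a` to `b` in `ℂ`. -/
noncomputable def lineIntegral (a b : ℂ) (f : ℂ → ℂ) : ℂ :=
  ∫ t in (0:ℝ)..1, (b - a) * f (a + (t : ℂ) * (b - a))

/-- Auxiliary iterated integral: the head of the list is the *outermost* integrand. -/
noncomputable def iterCAux (a : ℂ) : List (ℂ → ℂ) → ℂ → ℂ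
  | [], _ => 1
  | f :: fs, b =>
      ∫ t in (0:ℝ)..1,
        (b - a) * (f (a + (t : ℂ) * (b - a)) * iterCAux a fs (a + (t : ℂ) * (b - a)))

/-- `iterC a b [f₁, …, fₙ]` is the iterated integral
`C_a^b(f₁,…,fₙ) = ∫_a^b fₙ(zₙ) ∫_a^{zₙ} f_{n-1}(z_{n-1}) ⋯ ∫_a^{z₂} f₁(z₁) dz₁ ⋯ dzₙ`,
with all integration along straight-line paths. -/
noncomputable def iterC (a b : ℂ) (l : List (ℂ → ℂ)) : ℂ := iterCAux a l.reverse b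

/-- derivative of line integral of entire function -/
theorem hasDerivAt_line (a : ℂ) {F : ℂ → ℂ} (hF : Differentiable ℂ F) (b : ℂ) :
    HasDerivAt (fun z => ∫ t in (0:ℝ)..1, (z - a) * F (a + (t : ℂ) * (z - a))) (F b) b := by
  have hFc : Continuous F := hF.continuous
  have hF'c : Continuous (deriv F) := (hF.contDiff (n := 2)).continuous_deriv (by norm_num)
  set g' : ℂ → ℝ → ℂ := fun z t =>
    F (a + (t:ℂ) * (z - a)) + (z - a) * (deriv F (a + (t:ℂ) * (z - a)) * (t:ℂ)) with hg'
  have hcont : Continuous fun p : ℂ × ℝ => g' p.1 p.2 := by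
    apply Continuous.add
    · exact hFc.comp (by fun_prop)
    · exact Continuous.mul (by fun_prop) (Continuous.mul (hF'c.comp (by fun_prop)) (by fun_prop))
  obtain ⟨C, hC⟩ := (((isCompact_closedBall b 1).prod isCompact_uIcc)).exists_bound_of_continuousOn
    hcont.continuousOn
  have hdiff : ∀ (t : ℝ) (z : ℂ),
      HasDerivAt (fun z => (z - a) * F (a + (t:ℂ) * (z - a))) (g' z t) z := by
    intro t z
    have h1 : HasDerivAt (fun z : ℂ => a + (t:ℂ) * (z - a)) (t:ℂ) z := by
      simpa using (((hasDerivAt_id z).sub_const a).const_mul (t:ℂ)).const_add a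
    have h2 : HasDerivAt (fun z : ℂ => F (a + (t:ℂ) * (z - a)))
        (deriv F (a + (t:ℂ) * (z - a)) * (t:ℂ)) z :=
      HasDerivAt.comp z ((hF _).hasDerivAt) h1
    have h3 : HasDerivAt (fun z : ℂ => z - a) 1 z := (hasDerivAt_id z).sub_const a
    have h4 := h3.mul h2
    rw [one_mul] at h4
    exact h4
  have key := intervalIntegral.hasDerivAt_integral_of_dominated_loc_of_deriv_le
    (F := fun z t => (z - a) * F (a + (t:ℂ) * (z - a))) (F' := g') (x₀ := b)
    (μ := MeasureTheory.volume) (a := (0:ℝ)) (b := (1:ℝ)) (bound := fun _ => C)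
    (Metric.ball_mem_nhds b one_pos)
    (Filter.Eventually.of_forall fun z => (Continuous.aestronglyMeasurable (by fun_prop)))
    ((Continuous.intervalIntegrable (by fun_prop) 0 1))
    (Continuous.aestronglyMeasurable (by fun_prop))
    (Filter.Eventually.of_forall fun t ht z hz => by
      exact hC (z, t) ⟨Metric.ball_subset_closedBall hz, Set.uIoc_subset_uIcc ht⟩)
    intervalIntegrable_const
    (Filter.Eventually.of_forall fun t ht z hz => hdiff t z)
  have hint : (∫ t in (0:ℝ)..1, g' b t) = F b := by
    have hφ : ∀ t ∈ Set.uIcc (0:ℝ) 1,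
        HasDerivAt (fun t : ℝ => (t:ℂ) * F (a + (t:ℂ) * (b - a))) (g' b t) t := by
      intro t _
      have hre : HasDerivAt (fun t : ℝ => (t:ℂ)) 1 t := by
        exact Complex.ofRealCLM.hasDerivAt (x := t)
      have hin : HasDerivAt (fun t : ℝ => a + (t:ℂ) * (b - a)) (b - a) t := by
        simpa using (hre.mul_const (b - a)).const_add a
      have hcomp : HasDerivAt (fun t : ℝ => F (a + (t:ℂ) * (b - a)))
          ((b - a) • deriv F (a + (t:ℂ) * (b - a))) t :=
        ((hF _).hasDerivAt).scomp t hin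
      have := hre.mul hcomp
      simp only [smul_eq_mul, one_mul] at this
      refine this.congr_deriv ?_
      simp [hg']; ring
    rw [intervalIntegral.integral_eq_sub_of_hasDerivAt hφ
      (Continuous.intervalIntegrable (by fun_prop) 0 1)]
    simp
  rw [hint] at key
  exact key.2

theorem iterCAux_cons_hasDerivAt (a : ℂ) (f : ℂ → ℂ) (fs : List (ℂ → ℂ))
    (hf : Differentiable ℂ f) (hfs : Differentiable ℂ (iterCAux a fs)) (b : ℂ) :
    HasDerivAt (iterCAux a (f :: fs)) (f b * iterCAux a fs b) b :=
  hasDerivAt_line a (hf.mul hfs) b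

theorem iterCAux_differentiable (a : ℂ) :
    ∀ fs : List (ℂ → ℂ), (∀ f ∈ fs, Differentiable ℂ f) → Differentiable ℂ (iterCAux a fs)
  | [], _ => differentiable_const 1
  | f :: fs, h => fun b =>
      (iterCAux_cons_hasDerivAt a f fs (h f List.mem_cons_self)
        (iterCAux_differentiable a fs fun g hg => h g (List.mem_cons_of_mem _ hg)) b).differentiableAt

theorem iterCAux_self (a : ℂ) (f : ℂ → ℂ) (fs : List (ℂ → ℂ)) :
    iterCAux a (f :: fs) a = 0 := by
  simp [iterCAux]

theorem stmt_2 (l : List (ℂ → ℂ)) (hl : ∀ f ∈ l, Differentiable ℂ f) (a b c : ℂ) :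
    iterC a c l =
      ∑ i ∈ Finset.range (l.length + 1), iterC a b (l.take i) * iterC b c (l.drop i) := by
  induction l using List.reverseRecOn generalizing c with
  | nil => simp [iterC, iterCAux]
  | append_singleton l' f ih =>
    have hf : Differentiable ℂ f := hl f (by simp)
    have hl' : ∀ g ∈ l', Differentiable ℂ g := fun g hg => hl g (by simp [hg])
    have ih' := ih hl'
    set n' := l'.length with hn'
    -- reverse identity
    have hrev : (l' ++ [f]).reverse = f :: l'.reverse := by simp
    -- the two functions of c
    set G : ℂ → ℂ := iterCAux a (f :: l'.reverse) with hG
    set R : ℂ → ℂ := fun c =>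
      (∑ i ∈ Finset.range (n' + 1),
        iterC a b (l'.take i) * iterCAux b (f :: (l'.drop i).reverse) c)
        + iterC a b (l' ++ [f]) with hR
    -- LHS = G c
    have hLHS : ∀ c, iterC a c (l' ++ [f]) = G c := by
      intro c; rw [iterC, hrev]
    -- RHS = R c
    have hRHS : ∀ c, (∑ i ∈ Finset.range ((l' ++ [f]).length + 1),
        iterC a b ((l' ++ [f]).take i) * iterC b c ((l' ++ [f]).drop i)) = R c := by
      intro c
      have hlen : (l' ++ [f]).length = n' + 1 := by simp [hn']
      rw [hlen, Finset.sum_range_succ]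
      congr 1
      · apply Finset.sum_congr rfl
        intro i hi
        have hi' : i ≤ n' := Nat.lt_succ_iff.mp (Finset.mem_range.mp hi)
        rw [List.take_append_of_le_length hi', List.drop_append_of_le_length hi']
        congr 1
        rw [iterC]
        congr 1
        simp
      · rw [List.take_of_length_le (by simp [hn']), List.drop_of_length_le (by simp [hn'])]
        simp [iterC, iterCAux]
    -- differentiability facts
    have hdl' : Differentiable ℂ (iterCAux a l'.reverse) :=
      iterCAux_differentiable a _ (fun g hg => hl' g (List.mem_reverse.mp hg))
    have hGderiv : ∀ c, HasDerivAt G (f c * iterC a c l') c := fun c =>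
      iterCAux_cons_hasDerivAt a f l'.reverse hf hdl' c
    have hRderiv : ∀ c, HasDerivAt R (f c * iterC a c l') c := by
      intro c
      have hsum : HasDerivAt (fun c => ∑ i ∈ Finset.range (n' + 1),
          iterC a b (l'.take i) * iterCAux b (f :: (l'.drop i).reverse) c)
          (∑ i ∈ Finset.range (n' + 1),
            iterC a b (l'.take i) * (f c * iterCAux b (l'.drop i).reverse c)) c := by
        apply HasDerivAt.fun_sum
        intro i hi
        exact (iterCAux_cons_hasDerivAt b f (l'.drop i).reverse hf
          (iterCAux_differentiable b _ (fun g hg =>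
            hl' g (List.mem_of_mem_drop (List.mem_reverse.mp hg)))) c).const_mul _
      have := hsum.add_const (iterC a b (l' ++ [f]))
      rw [hR]
      refine HasDerivAt.congr_deriv this ?_
      rw [ih' c, Finset.mul_sum]
      exact Finset.sum_congr rfl fun i _ => by simp only [iterC]; ring
    -- value at b
    have hval : G b = R b := by
      simp only [hR]
      have h0 : ∀ i ∈ Finset.range (n' + 1),
          iterC a b (l'.take i) * iterCAux b (f :: (l'.drop i).reverse) b = 0 := fun i _ => by
        rw [iterCAux_self]; ring
      rw [Finset.sum_eq_zero h0, zero_add]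
      exact (hLHS b).symm
    -- constancy
    have hzero : ∀ x, HasDerivAt (fun c => G c - R c) 0 x := fun x => by
      have h := (hGderiv x).sub (hRderiv x)
      rw [sub_self] at h
      exact h
    have hconst := is_const_of_deriv_eq_zero (𝕜 := ℂ)
      (fun x => (hzero x).differentiableAt) (fun x => (hzero x).deriv) c b
    rw [hLHS c, hRHS c]
    have : G b - R b = 0 := by rw [hval, sub_self]
    exact sub_eq_zero.mp (hconst.trans this)
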